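/- Let R be a commutative ring and S an anti-Archimedean multiplicative subset of R. An R-module M is uniformly S-Noetherian if and only if there exists s ∈ S such that M is s-finite and 𝔭M is s-finite for every prime ideal 𝔭 of R. -/

import Mathlib

/-- A submodule `N` is `s`-finite if there is a finitely generated submodule `F`
with `s N ⊆ F ⊆ N`. -/
def SFinSub {R M : Type*} [CommRing R] [AddCommGroup M] [Module R M]
    (s : R) (N : Submodule R M) : Prop :=
  ∃ F : Submodule R M, F.FG ∧ F ≤ N ∧ ∀ x ∈ N, s • x ∈ F

/-- `S` is anti-Archimedean: for every `s ∈ S`, `(⋂_{n ≥ 1} sⁿR) ∩ S ≠ ∅`. -/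
def AntiArchimedean {R : Type*} [CommRing R] (S : Submonoid R) : Prop :=
  ∀ s ∈ S, ∃ t ∈ S, ∀ n : ℕ, 1 ≤ n → s ^ n ∣ t

section Aux

variable {R M : Type*} [CommRing R] [AddCommGroup M] [Module R M]

/-- Key combination step: if `N ⊔ bM` is `s^j`-finite and `(N :_M b)` is `s^k`-finite,
then `N` is `s^(j+k)`-finite. -/
theorem sfin_step (s b : R) (j k : ℕ) (N : Submodule R M)
    (hj : SFinSub (s ^ j) (N ⊔ Submodule.map (LinearMap.lsmul R M b) ⊤))
    (hk : SFinSub (s ^ k) (Submodule.comap (LinearMap.lsmul R M b) N)) :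
    SFinSub (s ^ (j + k)) N := by
  obtain ⟨F, hFfg, hFle, hFs⟩ := hj
  obtain ⟨G, hGfg, hGle, hGs⟩ := hk
  obtain ⟨T, hT⟩ := hFfg
  have hdec : ∀ g ∈ T, ∃ n, n ∈ N ∧ ∃ m : M, n + b • m = g := by
    intro g hg
    have hgF : g ∈ N ⊔ Submodule.map (LinearMap.lsmul R M b) ⊤ :=
      hFle (hT ▸ Submodule.subset_span (Finset.mem_coe.mpr hg))
    obtain ⟨y, hy, z, hz, hyz⟩ := Submodule.mem_sup.mp hgF
    obtain ⟨m, -, hm⟩ := Submodule.mem_map.mp hz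
    refine ⟨y, hy, m, ?_⟩
    simp only [LinearMap.lsmul_apply] at hm
    rw [hm, hyz]
  choose! ν hν μ hμ using hdec
  refine ⟨Submodule.span R (ν '' T) ⊔ Submodule.map (LinearMap.lsmul R M b) G,
    (Submodule.fg_span (T.finite_toSet.image ν)).sup (hGfg.map (LinearMap.lsmul R M b)), ?_, ?_⟩
  · refine sup_le (Submodule.span_le.mpr ?_) (Submodule.map_le_iff_le_comap.mpr hGle)
    rintro - ⟨g, hg, rfl⟩
    exact hν g (Finset.mem_coe.mp hg)
  · intro y hy
    have h1 : s ^ j • y ∈ Submodule.span R (T : Set M) := by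
      rw [hT]; exact hFs y (Submodule.mem_sup_left hy)
    obtain ⟨c, -, hc⟩ := Submodule.mem_span_finset.mp h1
    set w := ∑ g ∈ T, c g • ν g with hw
    set z := ∑ g ∈ T, c g • μ g with hz
    have hwN : w ∈ N := Submodule.sum_mem _ fun g hg => Submodule.smul_mem _ _ (hν g hg)
    have hwE : w ∈ Submodule.span R (ν '' T) :=
      Submodule.sum_mem _ fun g hg =>
        Submodule.smul_mem _ _ (Submodule.subset_span (Set.mem_image_of_mem ν hg))
    have hdecomp : w + b • z = s ^ j • y := by
      rw [hw, hz, Finset.smul_sum, ← Finset.sum_add_distrib, ← hc]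
      refine Finset.sum_congr rfl fun g hg => ?_
      rw [smul_comm b (c g), ← smul_add, hμ g hg]
    have hbz : b • z ∈ N := by
      have : b • z = s ^ j • y - w := by rw [← hdecomp]; abel
      rw [this]
      exact Submodule.sub_mem _ (Submodule.smul_mem _ _ hy) hwN
    have hzC : z ∈ Submodule.comap (LinearMap.lsmul R M b) N := by
      simpa [LinearMap.lsmul_apply] using hbz
    have h2 : s ^ k • z ∈ G := hGs z hzC
    have hfinal : s ^ (j + k) • y = s ^ k • w + b • (s ^ k • z) := by
      rw [pow_add, mul_comm, mul_smul, ← hdecomp, smul_add, smul_comm (s ^ k) b]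
    rw [hfinal]
    exact Submodule.add_mem _ (Submodule.mem_sup_left (Submodule.smul_mem _ _ hwE))
      (Submodule.mem_sup_right (Submodule.mem_map.mpr ⟨s ^ k • z, h2, rfl⟩))

/-- Key step for the saturated case: if `N ⊔ Rx` is `s^j`-finite, every `r` with
`r • x ∈ N` lies in `p`, and `pM` is `s`-finite, then `N` is `s^(j+1)`-finite. -/
theorem sfin_stepB (s : R) (j : ℕ) (N : Submodule R M) (x : M) (p : Ideal R)
    (hj : SFinSub (s ^ j) (N ⊔ Submodule.span R {x}))
    (hx : ∀ r : R, r • x ∈ N → r ∈ p)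
    (hpN : p • (⊤ : Submodule R M) ≤ N)
    (hk : SFinSub s (p • (⊤ : Submodule R M))) :
    SFinSub (s ^ (j + 1)) N := by
  obtain ⟨F, hFfg, hFle, hFs⟩ := hj
  obtain ⟨G, hGfg, hGle, hGs⟩ := hk
  obtain ⟨T, hT⟩ := hFfg
  have hdec : ∀ g ∈ T, ∃ n, n ∈ N ∧ ∃ r : R, n + r • x = g := by
    intro g hg
    have hgF : g ∈ N ⊔ Submodule.span R {x} :=
      hFle (hT ▸ Submodule.subset_span (Finset.mem_coe.mpr hg))
    obtain ⟨y, hy, z, hz, hyz⟩ := Submodule.mem_sup.mp hgF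
    obtain ⟨r, hr⟩ := Submodule.mem_span_singleton.mp hz
    exact ⟨y, hy, r, by rw [hr, hyz]⟩
  choose! ν hν c hc using hdec
  refine ⟨Submodule.span R (ν '' T) ⊔ G,
    (Submodule.fg_span (T.finite_toSet.image ν)).sup hGfg, ?_, ?_⟩
  · refine sup_le (Submodule.span_le.mpr ?_) (hGle.trans hpN)
    rintro - ⟨g, hg, rfl⟩
    exact hν g (Finset.mem_coe.mp hg)
  · intro y hy
    have h1 : s ^ j • y ∈ Submodule.span R (T : Set M) := by
      rw [hT]; exact hFs y (Submodule.mem_sup_left hy)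
    obtain ⟨d, -, hd⟩ := Submodule.mem_span_finset.mp h1
    set w := ∑ g ∈ T, d g • ν g with hw
    set r₀ := ∑ g ∈ T, d g * c g with hr₀
    have hwN : w ∈ N := Submodule.sum_mem _ fun g hg => Submodule.smul_mem _ _ (hν g hg)
    have hwE : w ∈ Submodule.span R (ν '' T) :=
      Submodule.sum_mem _ fun g hg =>
        Submodule.smul_mem _ _ (Submodule.subset_span (Set.mem_image_of_mem ν hg))
    have hdecomp : w + r₀ • x = s ^ j • y := by
      rw [hw, hr₀, Finset.sum_smul, ← Finset.sum_add_distrib, ← hd]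
      refine Finset.sum_congr rfl fun g hg => ?_
      rw [mul_smul, ← smul_add, hc g hg]
    have hrx : r₀ • x ∈ N := by
      have : r₀ • x = s ^ j • y - w := by rw [← hdecomp]; abel
      rw [this]
      exact Submodule.sub_mem _ (Submodule.smul_mem _ _ hy) hwN
    have hrp : r₀ ∈ p := hx r₀ hrx
    have h2 : s • (r₀ • x) ∈ G :=
      hGs _ (Submodule.smul_mem_smul hrp Submodule.mem_top)
    have hfinal : s ^ (j + 1) • y = s • w + s • (r₀ • x) := by
      rw [pow_succ, mul_comm, mul_smul, ← hdecomp, smul_add]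
    rw [hfinal]
    exact Submodule.add_mem _ (Submodule.mem_sup_left (Submodule.smul_mem _ _ hwE))
      (Submodule.mem_sup_right h2)

end Aux

theorem uniformly_S_noetherian_iff_prime_smul_sfinite
    {R M : Type*} [CommRing R] [AddCommGroup M] [Module R M]
    (S : Submonoid R) (hS : AntiArchimedean S) :
    (∃ s ∈ S, ∀ N : Submodule R M, SFinSub s N) ↔
    (∃ s ∈ S, SFinSub s (⊤ : Submodule R M) ∧
      ∀ p : Ideal R, p.IsPrime → SFinSub s (p • (⊤ : Submodule R M))) := by
  constructor
  · rintro ⟨s, hsS, h⟩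
    exact ⟨s, hsS, h ⊤, fun p _ => h _⟩
  · rintro ⟨s, hsS, hM, hp⟩
    obtain ⟨t, htS, hts⟩ := hS s hsS
    refine ⟨t, htS, fun N => ?_⟩
    suffices key : ∀ N : Submodule R M, ∃ n, 1 ≤ n ∧ SFinSub (s ^ n) N by
      obtain ⟨n, hn, F, hF, hFle, hFs⟩ := key N
      obtain ⟨d, hd⟩ := hts n hn
      refine ⟨F, hF, hFle, fun x hx => ?_⟩
      rw [hd, mul_comm, mul_smul]
      exact F.smul_mem d (hFs x hx)
    by_contra hcon
    push_neg at hcon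
    obtain ⟨N₀, hN₀⟩ := hcon
    set Ω : Set (Submodule R M) := {N | ∀ n, 1 ≤ n → ¬ SFinSub (s ^ n) N} with hΩ
    have hchainub : ∀ c ⊆ Ω, IsChain (· ≤ ·) c → ∀ y ∈ c, ∃ ub ∈ Ω, ∀ z ∈ c, z ≤ ub := by
      intro c hcΩ hchain y hyc
      refine ⟨sSup c, ?_, fun z hz => le_sSup hz⟩
      intro n hn hSF
      obtain ⟨F, hFfg, hFle, hFs⟩ := hSF
      have hcomp := (Submodule.fg_iff_compact F).mp hFfg
      rw [CompleteLattice.isCompactElement_iff_le_of_directed_sSup_le] at hcomp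
      obtain ⟨Ni, hNic, hFNi⟩ := hcomp c ⟨y, hyc⟩ hchain.directedOn hFle
      exact hcΩ hNic n hn ⟨F, hFfg, hFNi, fun x hx => hFs x (le_sSup hNic hx)⟩
    obtain ⟨Nmax, -, hNmax⟩ := zorn_le_nonempty₀ Ω hchainub N₀ hN₀
    have hNmem : ∀ n, 1 ≤ n → ¬ SFinSub (s ^ n) Nmax := hNmax.1
    have hmax' : ∀ N' : Submodule R M, Nmax < N' → ∃ n, 1 ≤ n ∧ SFinSub (s ^ n) N' := by
      intro N' hlt
      by_contra h
      push_neg at h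
      exact hlt.ne (le_antisymm hlt.le (hNmax.2 (show N' ∈ Ω from h) hlt.le))
    set p : Ideal R := Nmax.colon ⊤ with hpdef
    have hpN : p • (⊤ : Submodule R M) ≤ Nmax :=
      Submodule.smul_le.mpr fun r hr m hm => Submodule.mem_colon.mp hr m hm
    have hNtop : Nmax ≠ ⊤ := by
      intro h
      exact hNmem 1 le_rfl (by rw [pow_one, h]; exact hM)
    have hNcomap : ∀ b : R, Nmax ≤ Submodule.comap (LinearMap.lsmul R M b) Nmax := by
      intro b y hy
      exact Submodule.mem_comap.mpr (by simpa using Submodule.smul_mem _ b hy)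
    have hbig : ∀ b : R, b ∉ p →
        Nmax < Nmax ⊔ Submodule.map (LinearMap.lsmul R M b) ⊤ := by
      intro b hb
      obtain ⟨m, hm⟩ : ∃ m : M, b • m ∉ Nmax := by
        by_contra h; push_neg at h
        exact hb (Submodule.mem_colon.mpr fun q _ => h q)
      refine lt_of_le_of_ne le_sup_left fun h => hm ?_
      rw [h]
      set_option linter.unnecessarySimpa false in
      refine Submodule.mem_sup_right ?_
      simpa [LinearMap.lsmul_apply] using
        Submodule.mem_map_of_mem (f := LinearMap.lsmul R M b)
          (Submodule.mem_top (x := m))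
    have hprime : p.IsPrime := by
      rw [Ideal.isPrime_iff]
      constructor
      · intro h
        refine hNtop (eq_top_iff.mpr fun m _ => ?_)
        have h1 : (1 : R) ∈ p := h ▸ Submodule.mem_top
        simpa using Submodule.mem_colon.mp h1 m trivial
      · intro a b hab
        by_contra hcon2
        push_neg at hcon2
        obtain ⟨ha, hb⟩ := hcon2
        obtain ⟨j, hj1, hjF⟩ := hmax' _ (hbig b hb)
        have hlt : Nmax < Submodule.comap (LinearMap.lsmul R M b) Nmax := by
          obtain ⟨m, hm⟩ : ∃ m : M, a • m ∉ Nmax := by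
            by_contra h; push_neg at h
            exact ha (Submodule.mem_colon.mpr fun q _ => h q)
          refine lt_of_le_of_ne (hNcomap b) fun h => hm ?_
          rw [h]
          refine Submodule.mem_comap.mpr ?_
          simp only [LinearMap.lsmul_apply]
          have hba : b • a • m = (a * b) • m := by rw [← mul_smul, mul_comm]
          rw [hba]
          exact Submodule.mem_colon.mp hab m trivial
        obtain ⟨k, hk1, hkF⟩ := hmax' _ hlt
        exact hNmem (j + k) (by omega) (sfin_step s b j k Nmax hjF hkF)
    have hpM := hp p hprime
    by_cases hsat : ∀ a : R, a ∉ p → Submodule.comap (LinearMap.lsmul R M a) Nmax ≤ Nmax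
    · obtain ⟨x, hx⟩ : ∃ x : M, x ∉ Nmax := by
        by_contra h; push_neg at h
        exact hNtop (eq_top_iff.mpr fun m _ => h m)
      have hxp : ∀ r : R, r • x ∈ Nmax → r ∈ p := by
        intro r hr
        by_contra hrp
        exact hx (hsat r hrp (Submodule.mem_comap.mpr (by simpa using hr)))
      have hlt : Nmax < Nmax ⊔ Submodule.span R {x} := by
        refine lt_of_le_of_ne le_sup_left fun h => hx ?_
        rw [h]
        exact Submodule.mem_sup_right (Submodule.mem_span_singleton_self x)
      obtain ⟨j, hj1, hjF⟩ := hmax' _ hlt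
      exact hNmem (j + 1) (by omega) (sfin_stepB s j Nmax x p hjF hxp hpN hpM)
    · push_neg at hsat
      obtain ⟨a, hap, hC⟩ := hsat
      have hlt : Nmax < Submodule.comap (LinearMap.lsmul R M a) Nmax :=
        lt_of_le_of_ne (hNcomap a) fun h => hC (le_of_eq h.symm)
      obtain ⟨j, hj1, hjF⟩ := hmax' _ (hbig a hap)
      obtain ⟨k, hk1, hkF⟩ := hmax' _ hlt
      exact hNmem (j + k) (by omega) (sfin_step s a j k Nmax hjF hkF)
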